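/- Let p ≥ 2 be a real number, and let x, y be nonnegative functions in L^p(μ) with x ≥ y almost everywhere. Then ‖x+y‖_p^p + ‖x−y‖_p^p ≥ 2(‖x‖_p^p + 2^(p-2)‖y‖_p^p), an improvement of Clarkson's inequality ‖x+y‖_p^p + ‖x−y‖_p^p ≥ 2(‖x‖_p^p + ‖y‖_p^p) since 2^(p-2) ≥ 1. -/

import Mathlib

open MeasureTheory ENNReal

lemma superadd_rpow {q a b : ℝ} (hq : 1 ≤ q) (ha : 0 ≤ a) (hb : 0 ≤ b) :
    a ^ q + b ^ q ≤ (a + b) ^ q := by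
  have h2 := NNReal.coe_le_coe.2 (NNReal.add_rpow_le_rpow_add a.toNNReal b.toNNReal hq)
  push_cast [NNReal.coe_rpow, Real.coe_toNNReal a ha, Real.coe_toNNReal b hb] at h2
  exact h2

lemma pointwise_key {p : ℝ} (hp : 2 ≤ p) {a b : ℝ} (hb : 0 ≤ b) (hba : b ≤ a) :
    2 * a ^ p + 2 ^ (p - 1) * b ^ p ≤ (a + b) ^ p + (a - b) ^ p := by
  have hp1 : (1 : ℝ) ≤ p := by linarith
  have ha : 0 ≤ a := le_trans hb hba
  set f : ℝ → ℝ := fun t => (a + t) ^ p + (a - t) ^ p - 2 ^ (p - 1) * t ^ p with hf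
  have hderiv : ∀ t : ℝ, HasDerivAt f
      ((p * (a + t) ^ (p - 1)) * 1 + (p * (a - t) ^ (p - 1)) * (-1)
        - 2 ^ (p - 1) * (p * t ^ (p - 1))) t := by
    intro t
    have h1 : HasDerivAt (fun t : ℝ => (a + t) ^ p) ((p * (a + t) ^ (p - 1)) * 1) t :=
      (Real.hasDerivAt_rpow_const (Or.inr hp1)).comp t ((hasDerivAt_id t).const_add a)
    have h2 : HasDerivAt (fun t : ℝ => (a - t) ^ p) ((p * (a - t) ^ (p - 1)) * (-1)) t :=
      (Real.hasDerivAt_rpow_const (Or.inr hp1)).comp t ((hasDerivAt_id t).const_sub a)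
    have h3 : HasDerivAt (fun t : ℝ => 2 ^ (p - 1) * t ^ p)
        (2 ^ (p - 1) * (p * t ^ (p - 1))) t :=
      (Real.hasDerivAt_rpow_const (Or.inr hp1)).const_mul _
    exact (h1.add h2).sub h3
  have hmono : MonotoneOn f (Set.Icc 0 a) := by
    apply monotoneOn_of_deriv_nonneg (convex_Icc 0 a)
    · exact Continuous.continuousOn (by
        have : Differentiable ℝ f := fun t => (hderiv t).differentiableAt
        exact this.continuous)
    · intro t ht
      exact (hderiv t).differentiableAt.differentiableWithinAt
    · intro t ht
      rw [interior_Icc, Set.mem_Ioo] at ht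
      rw [(hderiv t).deriv]
      have hsa : p * (a - t) ^ (p - 1) + 2 ^ (p - 1) * (p * t ^ (p - 1))
          ≤ p * (a + t) ^ (p - 1) := by
        have hq1 : (1 : ℝ) ≤ p - 1 := by linarith
        have key : (a - t) ^ (p - 1) + (2 * t) ^ (p - 1) ≤ ((a - t) + 2 * t) ^ (p - 1) :=
          superadd_rpow hq1 (by linarith [ht.2]) (by linarith [ht.1])
        have h2t : (2 * t) ^ (p - 1) = 2 ^ (p - 1) * t ^ (p - 1) :=
          Real.mul_rpow (by norm_num) ht.1.le
        have heq : (a - t) + 2 * t = a + t := by ring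
        rw [h2t, heq] at key
        calc p * (a - t) ^ (p - 1) + 2 ^ (p - 1) * (p * t ^ (p - 1))
            = p * ((a - t) ^ (p - 1) + 2 ^ (p - 1) * t ^ (p - 1)) := by ring
          _ ≤ p * (a + t) ^ (p - 1) := by
              apply mul_le_mul_of_nonneg_left key (by linarith)
      linarith
  have h0 : f 0 ≤ f b := hmono (Set.mem_Icc.2 ⟨le_refl 0, ha⟩) (Set.mem_Icc.2 ⟨hb, hba⟩) hb
  have hf0 : f 0 = 2 * a ^ p := by
    simp only [hf, add_zero, sub_zero]
    rw [Real.zero_rpow (by linarith : p ≠ 0)]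
    ring
  rw [hf0] at h0
  simp only [hf] at h0
  linarith

theorem stmt17 {X : Type*} [MeasurableSpace X] (μ : Measure X) (p : ℝ) (hp : 2 ≤ p)
    (x y : X → ℝ) (hx : MemLp x (ENNReal.ofReal p) μ) (hy : MemLp y (ENNReal.ofReal p) μ)
    (h : ∀ᵐ t ∂μ, 0 ≤ y t ∧ y t ≤ x t) :
    eLpNorm (x + y) (ENNReal.ofReal p) μ ^ p + eLpNorm (x - y) (ENNReal.ofReal p) μ ^ p ≥
      2 * (eLpNorm x (ENNReal.ofReal p) μ ^ p +
        (2 : ℝ≥0∞) ^ (p - 2) * eLpNorm y (ENNReal.ofReal p) μ ^ p) := by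
  have hp0 : (0 : ℝ) < p := by linarith
  have hq0 : ENNReal.ofReal p ≠ 0 := by simp [ENNReal.ofReal_eq_zero]; linarith
  have hqt : ENNReal.ofReal p ≠ ∞ := ENNReal.ofReal_ne_top
  have htr : (ENNReal.ofReal p).toReal = p := ENNReal.toReal_ofReal hp0.le
  -- rewrite eLpNorm ^ p as lintegral
  have key : ∀ f : X → ℝ, eLpNorm f (ENNReal.ofReal p) μ ^ p
      = ∫⁻ t, (‖f t‖₊ : ℝ≥0∞) ^ p ∂μ := by
    intro f
    rw [eLpNorm_eq_lintegral_rpow_enorm_toReal hq0 hqt, htr, ← ENNReal.rpow_mul, one_div,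
      inv_mul_cancel₀ (ne_of_gt hp0), ENNReal.rpow_one]
    rfl
  simp only [key]
  have hxm : AEMeasurable (fun t => (‖x t‖₊ : ℝ≥0∞) ^ p) μ :=
    hx.aestronglyMeasurable.enorm.pow_const p
  have hym : AEMeasurable (fun t => (‖y t‖₊ : ℝ≥0∞) ^ p) μ :=
    hy.aestronglyMeasurable.enorm.pow_const p
  have hsm : AEMeasurable (fun t => (‖(x + y) t‖₊ : ℝ≥0∞) ^ p) μ :=
    (hx.aestronglyMeasurable.add hy.aestronglyMeasurable).enorm.pow_const p
  have hdm : AEMeasurable (fun t => (‖(x - y) t‖₊ : ℝ≥0∞) ^ p) μ :=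
    (hx.aestronglyMeasurable.sub hy.aestronglyMeasurable).enorm.pow_const p
  have h21 : (2 : ℝ≥0∞) * 2 ^ (p - 2) = 2 ^ (p - 1) := by
    rw [show p - 1 = 1 + (p - 2) by ring,
      ENNReal.rpow_add 1 (p - 2) two_ne_zero ENNReal.ofNat_ne_top, ENNReal.rpow_one]
  rw [ge_iff_le]
  calc 2 * ((∫⁻ t, (‖x t‖₊ : ℝ≥0∞) ^ p ∂μ) + 2 ^ (p - 2) * ∫⁻ t, (‖y t‖₊ : ℝ≥0∞) ^ p ∂μ)
      = ∫⁻ t, (2 * (‖x t‖₊ : ℝ≥0∞) ^ p + 2 ^ (p - 1) * (‖y t‖₊ : ℝ≥0∞) ^ p) ∂μ := by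
        rw [lintegral_add_left' (hxm.const_mul 2), lintegral_const_mul'' 2 hxm,
          lintegral_const_mul'' _ hym, mul_add, ← mul_assoc, h21]
    _ ≤ ∫⁻ t, ((‖(x + y) t‖₊ : ℝ≥0∞) ^ p + (‖(x - y) t‖₊ : ℝ≥0∞) ^ p) ∂μ := by
        apply lintegral_mono_ae
        filter_upwards [h] with t ht
        obtain ⟨hy0, hyx⟩ := ht
        have hx0 : 0 ≤ x t := le_trans hy0 hyx
        have hkey := pointwise_key hp hy0 hyx
        simp only [Pi.add_apply, Pi.sub_apply, ← enorm_eq_nnnorm]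
        rw [Real.enorm_eq_ofReal hx0, Real.enorm_eq_ofReal hy0,
          Real.enorm_eq_ofReal (by linarith : (0:ℝ) ≤ x t + y t),
          Real.enorm_eq_ofReal (by linarith : (0:ℝ) ≤ x t - y t),
          ENNReal.ofReal_rpow_of_nonneg hx0 hp0.le,
          ENNReal.ofReal_rpow_of_nonneg hy0 hp0.le,
          ENNReal.ofReal_rpow_of_nonneg (by linarith) hp0.le,
          ENNReal.ofReal_rpow_of_nonneg (by linarith) hp0.le]
        have h2e : (2 : ℝ≥0∞) ^ (p - 1) = ENNReal.ofReal (2 ^ (p - 1)) := by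
          rw [show (2 : ℝ≥0∞) = ENNReal.ofReal 2 by norm_num,
            ENNReal.ofReal_rpow_of_pos two_pos]
        have h2e' : (2 : ℝ≥0∞) = ENNReal.ofReal 2 := by norm_num
        rw [h2e, h2e', ← ENNReal.ofReal_mul (by norm_num), ← ENNReal.ofReal_mul
          (Real.rpow_nonneg (by norm_num) _), ← ENNReal.ofReal_add
          (by positivity) (by positivity), ← ENNReal.ofReal_add
          (Real.rpow_nonneg (by linarith) _) (Real.rpow_nonneg (by linarith) _)]
        exact ENNReal.ofReal_le_ofReal hkey
    _ = (∫⁻ t, (‖(x + y) t‖₊ : ℝ≥0∞) ^ p ∂μ) + ∫⁻ t, (‖(x - y) t‖₊ : ℝ≥0∞) ^ p ∂μ :=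
        lintegral_add_left' hsm _
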